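/- If a semi-Markovian causal model (SMCM) G over a finite vertex set V satisfies the Markov and V-adjacency-faithfulness assumptions with an independence model I over V, then G is V-adjacency-minimal with I: no SMCM over V with strictly fewer virtual adjacencies than G satisfies the Markov assumption with I. In particular, Markov plus Faithfulness entails V-adjacency-minimality. -/

import Mathlib

/-- The kind of an edge as traversed from left to right along a path:
forward directed (`a → b`), backward directed (`a ← b`), or bidirected (`a ↔ b`). -/
inductive EKind : Type
  | fwd | bwd | bi
deriving DecidableEq, Inhabited

/-- The edge kind has an arrowhead at its left endpoint. -/
def EKind.arrowLeft : EKind → Prop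
  | .fwd => False
  | .bwd => True
  | .bi  => True

/-- The edge kind has an arrowhead at its right endpoint. -/
def EKind.arrowRight : EKind → Prop
  | .fwd => True
  | .bwd => False
  | .bi  => True

/-- A mixed graph over a vertex type `V`: a set of directed edges and a set of
bidirected edges between distinct vertices. -/
structure MGraph (V : Type) where
  dir : V → V → Prop
  bidir : V → V → Prop
  dir_irrefl : ∀ x, ¬ dir x x
  bidir_irrefl : ∀ x, ¬ bidir x x
  bidir_symm : ∀ x y, bidir x y → bidir y x

namespace MGraph

variable {V : Type}

/-- There is an edge of the given kind (read left-to-right) between `a` and `b`. -/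
def edgeKind (G : MGraph V) : EKind → V → V → Prop
  | .fwd, a, b => G.dir a b
  | .bwd, a, b => G.dir b a
  | .bi,  a, b => G.bidir a b

/-- `x` is an ancestor of `y`: `x = y` or there is a directed path from `x` to `y`. -/
def Ancestor (G : MGraph V) : V → V → Prop := Relation.ReflTransGen G.dir

/-- The graph has no directed cycle. -/
def Acyclic (G : MGraph V) : Prop := ∀ x y, G.Ancestor x y → G.Ancestor y x → x = y

/-- `x` and `y` are adjacent: some edge joins them. -/
def Adj (G : MGraph V) (x y : V) : Prop := G.dir x y ∨ G.dir y x ∨ G.bidir x y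

/-- A path between `x` and `y`: a sequence of distinct vertices starting at `x` and
ending at `y`, together with, for each consecutive pair, an edge of the graph between
them (recorded by its kind). -/
structure Path (G : MGraph V) (x y : V) : Type where
  verts : List V
  kinds : List EKind
  len_eq : verts.length = kinds.length + 1
  nodup : verts.Nodup
  head_eq : verts.head? = some x
  last_eq : verts.getLast? = some y
  valid : ∀ i, i < kinds.length →
    G.edgeKind (kinds.getD i .fwd) (verts.getD i x) (verts.getD (i + 1) x)

namespace Path

variable {G : MGraph V} {x y : V}

/-- The `i`-th vertex on the path. -/
def vert (p : G.Path x y) (i : ℕ) : V := p.verts.getD i x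

/-- The kind of the `i`-th edge on the path. -/
def kind (p : G.Path x y) (i : ℕ) : EKind := p.kinds.getD i .fwd

/-- The (non-endpoint) vertex at position `i` is a collider on the path: both incident
edges have an arrowhead at it. -/
def ColliderAt (p : G.Path x y) (i : ℕ) : Prop :=
  1 ≤ i ∧ i + 1 < p.verts.length ∧
    (p.kind (i - 1)).arrowRight ∧ (p.kind i).arrowLeft

/-- The path is m-connecting given `Z`: every non-collider on it is not in `Z` and
every collider on it has a descendant in `Z`. -/
def MConn (p : G.Path x y) (Z : Set V) : Prop :=
  ∀ i, 1 ≤ i → i + 1 < p.verts.length →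
    (p.ColliderAt i → ∃ d ∈ Z, G.Ancestor (p.vert i) d) ∧
    (¬ p.ColliderAt i → p.vert i ∉ Z)

/-- The path is an inducing path: every non-endpoint vertex is a collider on the path
and an ancestor of one of the endpoints. -/
def Inducing (p : G.Path x y) : Prop :=
  ∀ i, 1 ≤ i → i + 1 < p.verts.length →
    p.ColliderAt i ∧ (G.Ancestor (p.vert i) x ∨ G.Ancestor (p.vert i) y)

end Path

/-- Distinct vertices `x, y ∉ Z` are m-separated by `Z`: no path between them is
m-connecting given `Z`. -/
def MSep (G : MGraph V) (x y : V) (Z : Set V) : Prop :=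
  x ≠ y ∧ x ∉ Z ∧ y ∉ Z ∧
    (∀ p : G.Path x y, ¬ p.MConn Z) ∧ (∀ p : G.Path y x, ¬ p.MConn Z)

/-- Sets `A` and `B` are m-separated by `C`: every `a ∈ A` and `b ∈ B` are. -/
def MSepSets (G : MGraph V) (A B C : Set V) : Prop :=
  ∀ a ∈ A, ∀ b ∈ B, G.MSep a b C

/-- `x` and `y` are virtually adjacent: there is an inducing path between them. -/
def VAdj (G : MGraph V) (x y : V) : Prop :=
  x ≠ y ∧ ((∃ p : G.Path x y, p.Inducing) ∨ (∃ p : G.Path y x, p.Inducing))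

/-- The graph `M` corresponding to an SMCM `S`: distinct `x, y` are adjacent in `M`
iff there is an inducing path between them in `S`, with the edge oriented `x → y` if
`x` is an ancestor of `y` in `S`, `y → x` if `y` is an ancestor of `x` in `S`, and
`x ↔ y` otherwise. -/
def mag (S : MGraph V) : MGraph V where
  dir x y := S.VAdj x y ∧ S.Ancestor x y
  bidir x y := S.VAdj x y ∧ ¬ S.Ancestor x y ∧ ¬ S.Ancestor y x
  dir_irrefl := fun x h => h.1.1 rfl
  bidir_irrefl := fun x h => h.1.1 rfl
  bidir_symm := fun _ _ h => ⟨⟨h.1.1.symm, h.1.2.symm⟩, h.2.2, h.2.1⟩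

/-- An ancestral graph: at most one edge between any two vertices, and whenever `x`
is an ancestor of `y`, no edge between `x` and `y` has an arrowhead at `x`. -/
def Ancestral (G : MGraph V) : Prop :=
  (∀ x y, G.Ancestor x y → x ≠ y → ¬ G.dir y x ∧ ¬ G.bidir x y) ∧
  (∀ x y, ¬ (G.dir x y ∧ G.bidir x y))

/-- A maximal ancestral graph: an ancestral graph in which every pair of non-adjacent
vertices is m-separated by some subset of the remaining vertices. -/
def IsMAG (G : MGraph V) : Prop :=
  G.Ancestral ∧ ∀ x y : V, x ≠ y → ¬ G.Adj x y →
    ∃ Z : Set V, x ∉ Z ∧ y ∉ Z ∧ G.MSep x y Z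

/-- The number of edges of a mixed graph (directed edges plus bidirected edges, the
latter counted as unordered pairs). -/
noncomputable def numEdges (G : MGraph V) : ℕ :=
  {p : V × V | G.dir p.1 p.2}.ncard +
    {e : Sym2 V | ∃ a b, e = s(a, b) ∧ G.bidir a b}.ncard

/-- The number of virtual adjacencies (unordered pairs of virtually adjacent
vertices). -/
noncomputable def numVAdj (G : MGraph V) : ℕ :=
  {e : Sym2 V | ∃ a b, e = s(a, b) ∧ G.VAdj a b}.ncard

/-- The number of m-separation statements entailed by the graph: triples `(X, Y, Z)`
of pairwise disjoint subsets with `X, Y` nonempty such that `X` and `Y` are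
m-separated by `Z`. -/
noncomputable def numSep (G : MGraph V) : ℕ :=
  {t : Set V × Set V × Set V | t.1.Nonempty ∧ t.2.1.Nonempty ∧
    Disjoint t.1 t.2.1 ∧ Disjoint t.1 t.2.2 ∧ Disjoint t.2.1 t.2.2 ∧
    G.MSepSets t.1 t.2.1 t.2.2}.ncard

/-- An unshielded triple `⟨a, z, b⟩`: `a, z` adjacent, `z, b` adjacent, `a, b` not
adjacent. -/
def UnshieldedTriple (G : MGraph V) (a z b : V) : Prop :=
  a ≠ z ∧ z ≠ b ∧ a ≠ b ∧ G.Adj a z ∧ G.Adj z b ∧ ¬ G.Adj a b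

/-- Some edge between `a` and `z` has an arrowhead at `z`. -/
def ArrowAt (G : MGraph V) (a z : V) : Prop := G.dir a z ∨ G.bidir a z

/-- An unshielded collider: an unshielded triple whose two edges both have arrowheads
at the middle vertex. -/
def UnshieldedCollider (G : MGraph V) (a z b : V) : Prop :=
  G.UnshieldedTriple a z b ∧ G.ArrowAt a z ∧ G.ArrowAt b z

/-- A discriminating path for `⟨X, Z, Y⟩`: a path `(V₀, V₁, ..., Vₘ = X, Z, Y)` with
`m ≥ 1` such that `V₀` and `Y` are not adjacent and every `Vᵢ` with `1 ≤ i ≤ m` is a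
collider on the path and a parent of `Y`. -/
def IsDiscriminating (G : MGraph V) {v₀ w : V} (p : G.Path v₀ w) (X Z Y : V) : Prop :=
  4 ≤ p.verts.length ∧ w = Y ∧
  p.vert (p.verts.length - 3) = X ∧
  p.vert (p.verts.length - 2) = Z ∧
  v₀ ≠ Y ∧ ¬ G.Adj v₀ Y ∧
  ∀ i, 1 ≤ i → i ≤ p.verts.length - 3 → p.ColliderAt i ∧ G.dir (p.vert i) Y

end MGraph

/-- An independence model over `V`: a set of triples `(X, Y, Z)` of pairwise disjoint
subsets of `V` with `X, Y` nonempty. -/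
def IsIndepModel {V : Type} (I : Set (Set V × Set V × Set V)) : Prop :=
  ∀ t ∈ I, t.1.Nonempty ∧ t.2.1.Nonempty ∧
    Disjoint t.1 t.2.1 ∧ Disjoint t.1 t.2.2 ∧ Disjoint t.2.1 t.2.2

/-- `G` satisfies the Markov assumption with `I`: every triple `(X, Y, Z)` such that
`X` and `Y` are m-separated by `Z` in `G` belongs to `I`. -/
def Markov {V : Type} (G : MGraph V) (I : Set (Set V × Set V × Set V)) : Prop :=
  ∀ X Y Z : Set V, X.Nonempty → Y.Nonempty →
    Disjoint X Y → Disjoint X Z → Disjoint Y Z →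
    G.MSepSets X Y Z → (X, Y, Z) ∈ I

/-- `G` satisfies the Faithfulness assumption with `I`: every triple in `I` is
m-separated in `G`. -/
def Faithful {V : Type} (G : MGraph V) (I : Set (Set V × Set V × Set V)) : Prop :=
  ∀ X Y Z : Set V, (X, Y, Z) ∈ I → G.MSepSets X Y Z

/-- `G` satisfies the Adjacency-faithfulness assumption with `I`: for adjacent
distinct `x, y` and any `Z ⊆ V ∖ {x, y}`, the triple `({x}, {y}, Z)` is not in `I`. -/
def AdjFaithful {V : Type} (G : MGraph V) (I : Set (Set V × Set V × Set V)) : Prop :=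
  ∀ x y : V, x ≠ y → G.Adj x y →
    ∀ Z : Set V, x ∉ Z → y ∉ Z → ({x}, {y}, Z) ∉ I

/-- `G` satisfies the V-adjacency-faithfulness assumption with `I`: for virtually
adjacent `x, y` and any `Z ⊆ V ∖ {x, y}`, the triple `({x}, {y}, Z)` is not in `I`. -/
def VAdjFaithful {V : Type} (G : MGraph V) (I : Set (Set V × Set V × Set V)) : Prop :=
  ∀ x y : V, G.VAdj x y →
    ∀ Z : Set V, x ∉ Z → y ∉ Z → ({x}, {y}, Z) ∉ I

/-- A MAG `G` is NoE-minimal with `I`: no MAG over `V` with strictly fewer edges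
satisfies the Markov assumption with `I`. -/
def NoEMinimalMAG {V : Type} (G : MGraph V) (I : Set (Set V × Set V × Set V)) : Prop :=
  ¬ ∃ G' : MGraph V, G'.IsMAG ∧ G'.numEdges < G.numEdges ∧ Markov G' I

/-- An SMCM `G` is NoE-minimal with `I`: no SMCM over `V` with strictly fewer edges
satisfies the Markov assumption with `I`. -/
def NoEMinimalSMCM {V : Type} (G : MGraph V) (I : Set (Set V × Set V × Set V)) : Prop :=
  ¬ ∃ G' : MGraph V, G'.Acyclic ∧ G'.numEdges < G.numEdges ∧ Markov G' I

/-- An SMCM `G` is V-adjacency-minimal with `I`: no SMCM over `V` with strictly fewer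
virtual adjacencies satisfies the Markov assumption with `I`. -/
def VAdjMinimal {V : Type} (G : MGraph V) (I : Set (Set V × Set V × Set V)) : Prop :=
  ¬ ∃ G' : MGraph V, G'.Acyclic ∧ G'.numVAdj < G.numVAdj ∧ Markov G' I

/-- A MAG `G` is NoI-minimal with `I`: no MAG over `V` entailing strictly more
m-separation statements satisfies the Markov assumption with `I`. -/
def NoIMinimalMAG {V : Type} (G : MGraph V) (I : Set (Set V × Set V × Set V)) : Prop :=
  ¬ ∃ G' : MGraph V, G'.IsMAG ∧ G.numSep < G'.numSep ∧ Markov G' I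

/-- An SMCM `G` is NoI-minimal with `I`: no SMCM over `V` entailing strictly more
m-separation statements satisfies the Markov assumption with `I`. -/
def NoIMinimalSMCM {V : Type} (G : MGraph V) (I : Set (Set V × Set V × Set V)) : Prop :=
  ¬ ∃ G' : MGraph V, G'.Acyclic ∧ G.numSep < G'.numSep ∧ Markov G' I

section ListHelpers

variable {α : Type*}

lemma getD_eq_get' (l : List α) (d : α) {i : ℕ} (h : i < l.length) : l.getD i d = l[i] :=
  List.getD_eq_getElem l d h

lemma getD_append_left' (a b : List α) (d : α) {i : ℕ} (h : i < a.length) :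
    (a ++ b).getD i d = a.getD i d := by
  rw [List.getD_eq_getElem?_getD, List.getD_eq_getElem?_getD, List.getElem?_append_left h]

lemma getD_append_right' (a b : List α) (d : α) {i : ℕ} (h : a.length ≤ i) :
    (a ++ b).getD i d = b.getD (i - a.length) d := by
  rw [List.getD_eq_getElem?_getD, List.getD_eq_getElem?_getD, List.getElem?_append_right h]

lemma getD_take' (l : List α) (d : α) {i n : ℕ} (h : i < n) :
    (l.take n).getD i d = l.getD i d := by
  rw [List.getD_eq_getElem?_getD, List.getD_eq_getElem?_getD, List.getElem?_take, if_pos h]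

lemma getD_drop' (l : List α) (d : α) (i n : ℕ) :
    (l.drop n).getD i d = l.getD (n + i) d := by
  rw [List.getD_eq_getElem?_getD, List.getD_eq_getElem?_getD, List.getElem?_drop]

lemma getD_congr' (l : List α) {i : ℕ} (h : i < l.length) (d d' : α) :
    l.getD i d = l.getD i d' := by
  rw [List.getD_eq_getElem l d h, List.getD_eq_getElem l d' h]

lemma getD_replicate_lt' (n : ℕ) (a d : α) {i : ℕ} (h : i < n) :
    (List.replicate n a).getD i d = a := by
  rw [List.getD_eq_getElem?_getD, List.getElem?_replicate, if_pos h]; rfl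

lemma getD_replicate' (n : ℕ) (a : α) (i : ℕ) : (List.replicate n a).getD i a = a := by
  rw [List.getD_eq_getElem?_getD, List.getElem?_replicate]
  split <;> rfl

lemma head?_eq_getD (l : List α) (d : α) {z : α} (h : l.head? = some z) : l.getD 0 d = z := by
  rw [List.getD_eq_getElem?_getD, ← List.head?_eq_getElem?, h]; rfl

lemma getLast?_eq_getD (l : List α) (d : α) {z : α} (h : l.getLast? = some z) :
    l.getD (l.length - 1) d = z := by
  rw [List.getD_eq_getElem?_getD, ← List.getLast?_eq_getElem?, h]; rfl

lemma ne_nil_of_head? (l : List α) {z : α} (h : l.head? = some z) : l ≠ [] := by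
  intro hn; rw [hn] at h; simp at h

lemma exists_dup_of_not_nodup {l : List α} (d : α) (h : ¬ l.Nodup) :
    ∃ i j : ℕ, i < j ∧ j < l.length ∧ l.getD i d = l.getD j d := by
  rw [List.nodup_iff_injective_get] at h
  simp only [Function.Injective] at h
  push_neg at h
  obtain ⟨i, j, hij, hne⟩ := h
  rcases lt_or_gt_of_ne (fun hh : (i:ℕ) = (j:ℕ) => hne (Fin.ext hh)) with hlt | hlt
  · exact ⟨i, j, hlt, j.isLt, by rw [getD_eq_get' _ _ i.isLt, getD_eq_get' _ _ j.isLt]; simpa using hij⟩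
  · exact ⟨j, i, hlt, i.isLt, by rw [getD_eq_get' _ _ i.isLt, getD_eq_get' _ _ j.isLt]; simpa using hij.symm⟩

lemma chain'_getD {R : α → α → Prop} {l : List α} (h : l.Chain' R) (d : α) {i : ℕ}
    (hi : i + 1 < l.length) : R (l.getD i d) (l.getD (i+1) d) := by
  rw [getD_eq_get' _ _ (by omega), getD_eq_get' _ _ hi]
  exact List.isChain_iff_getElem.mp h i (by omega)

end ListHelpers
namespace EKind

lemma arrowRight_iff (k : EKind) : k.arrowRight ↔ k ≠ .bwd := by
  cases k <;> simp [arrowRight]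

lemma arrowLeft_iff (k : EKind) : k.arrowLeft ↔ k ≠ .fwd := by
  cases k <;> simp [arrowLeft]

end EKind

namespace MGraph

variable {V : Type}

/-- A walk: like a `Path` but vertices may repeat. -/
structure Walk (G : MGraph V) (x y : V) : Type where
  verts : List V
  kinds : List EKind
  len_eq : verts.length = kinds.length + 1
  head_eq : verts.head? = some x
  last_eq : verts.getLast? = some y
  valid : ∀ i, i < kinds.length →
    G.edgeKind (kinds.getD i .fwd) (verts.getD i x) (verts.getD (i + 1) x)

namespace Walk

variable {G : MGraph V} {x y : V}

def vert (w : G.Walk x y) (i : ℕ) : V := w.verts.getD i x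

def kind (w : G.Walk x y) (i : ℕ) : EKind := w.kinds.getD i .fwd

def ColliderAt (w : G.Walk x y) (i : ℕ) : Prop :=
  1 ≤ i ∧ i + 1 < w.verts.length ∧ (w.kind (i - 1)).arrowRight ∧ (w.kind i).arrowLeft

def Conn (w : G.Walk x y) (Z : Set V) : Prop :=
  ∀ i, 1 ≤ i → i + 1 < w.verts.length →
    (w.ColliderAt i → ∃ d ∈ Z, G.Ancestor (w.vert i) d) ∧
    (¬ w.ColliderAt i → w.vert i ∉ Z)

def Good (w : G.Walk x y) (Z : Set V) : Prop :=
  ∀ i, 1 ≤ i → i + 1 < w.verts.length →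
    (w.ColliderAt i →
      (∃ d ∈ Z, G.Ancestor (w.vert i) d) ∨ G.Ancestor (w.vert i) x ∨ G.Ancestor (w.vert i) y) ∧
    (¬ w.ColliderAt i → w.vert i ∉ Z)

lemma hlen (w : G.Walk x y) : w.verts.length = w.kinds.length + 1 := w.len_eq

lemma vert_zero (w : G.Walk x y) : w.vert 0 = x := head?_eq_getD _ _ w.head_eq

lemma vert_last (w : G.Walk x y) : w.vert (w.verts.length - 1) = y :=
  getLast?_eq_getD _ _ w.last_eq

lemma edge (w : G.Walk x y) {i : ℕ} (h : i < w.kinds.length) :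
    G.edgeKind (w.kind i) (w.vert i) (w.vert (i + 1)) := w.valid i h

lemma dir_of_fwd (w : G.Walk x y) {i : ℕ} (h : i < w.kinds.length) (hf : w.kind i = .fwd) :
    G.dir (w.vert i) (w.vert (i + 1)) := by
  have := w.edge h; rwa [hf] at this

lemma dir_of_bwd (w : G.Walk x y) {i : ℕ} (h : i < w.kinds.length) (hf : w.kind i = .bwd) :
    G.dir (w.vert (i + 1)) (w.vert i) := by
  have := w.edge h; rwa [hf] at this

lemma colliderAt_of (w : G.Walk x y) {i : ℕ} (h1 : 1 ≤ i) (h2 : i + 1 < w.verts.length)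
    (hl : w.kind (i - 1) ≠ .bwd) (hr : w.kind i ≠ .fwd) : w.ColliderAt i :=
  ⟨h1, h2, (EKind.arrowRight_iff _).mpr hl, (EKind.arrowLeft_iff _).mpr hr⟩

lemma not_colliderAt_left (w : G.Walk x y) {i : ℕ} (h : w.kind (i - 1) = .bwd) :
    ¬ w.ColliderAt i := by
  intro hc; exact ((EKind.arrowRight_iff _).mp hc.2.2.1) h

lemma not_colliderAt_right (w : G.Walk x y) {i : ℕ} (h : w.kind i = .fwd) :
    ¬ w.ColliderAt i := by
  intro hc; exact ((EKind.arrowLeft_iff _).mp hc.2.2.2) h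

/-- Ancestor along a forward run. -/
lemma anc_fwd_run (w : G.Walk x y) : ∀ (n a : ℕ), a + n ≤ w.kinds.length →
    (∀ k, a ≤ k → k < a + n → w.kind k = .fwd) → G.Ancestor (w.vert a) (w.vert (a + n)) := by
  intro n
  induction n with
  | zero => intro a _ _; exact Relation.ReflTransGen.refl
  | succ n ih =>
    intro a hle hk
    have h1 : G.Ancestor (w.vert a) (w.vert (a + n)) :=
      ih a (by omega) (fun k h1 h2 => hk k h1 (by omega))
    exact h1.tail (w.dir_of_fwd (i := a + n) (by omega) (hk (a + n) (by omega) (by omega)))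

/-- Ancestor along a backward run. -/
lemma anc_bwd_run (w : G.Walk x y) : ∀ (n a : ℕ), a + n ≤ w.kinds.length →
    (∀ k, a ≤ k → k < a + n → w.kind k = .bwd) → G.Ancestor (w.vert (a + n)) (w.vert a) := by
  intro n
  induction n with
  | zero => intro a _ _; exact Relation.ReflTransGen.refl
  | succ n ih =>
    intro a hle hk
    have h1 : G.Ancestor (w.vert (a + n)) (w.vert a) :=
      ih a (by omega) (fun k h1 h2 => hk k h1 (by omega))
    exact Relation.ReflTransGen.head
      (w.dir_of_bwd (i := a + n) (by omega) (hk (a + n) (by omega) (by omega))) h1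

lemma anc_fwd_of (w : G.Walk x y) {a b : ℕ} (hab : a ≤ b) (hb : b ≤ w.kinds.length)
    (hk : ∀ k, a ≤ k → k < b → w.kind k = .fwd) : G.Ancestor (w.vert a) (w.vert b) := by
  have := w.anc_fwd_run (b - a) a (by omega) (fun k h1 h2 => hk k h1 (by omega))
  rwa [show a + (b - a) = b by omega] at this

lemma anc_bwd_of (w : G.Walk x y) {a b : ℕ} (hab : a ≤ b) (hb : b ≤ w.kinds.length)
    (hk : ∀ k, a ≤ k → k < b → w.kind k = .bwd) : G.Ancestor (w.vert b) (w.vert a) := by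
  have := w.anc_bwd_run (b - a) a (by omega) (fun k h1 h2 => hk k h1 (by omega))
  rwa [show a + (b - a) = b by omega] at this

/-- From a forward edge at `i` with a later non-forward edge, the vertex `i` has a
descendant in `Z` (on a `Conn` walk). -/
lemma fwd_desc {Z : Set V} {w : G.Walk x y} (hconn : w.Conn Z) {i k : ℕ} (hik : i < k)
    (hk : k < w.kinds.length) (hf : w.kind i = .fwd) (hne : w.kind k ≠ .fwd) :
    ∃ d ∈ Z, G.Ancestor (w.vert i) d := by
  classical
  have hex : ∃ m, i < m ∧ m < w.kinds.length ∧ w.kind m ≠ .fwd := ⟨k, hik, hk, hne⟩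
  obtain ⟨hm1, hm2, hm3⟩ := Nat.find_spec hex
  set m := Nat.find hex with hmdef
  have hrun : ∀ j, i ≤ j → j < m → w.kind j = .fwd := by
    intro j hij hjm
    rcases eq_or_lt_of_le hij with rfl | hlt
    · exact hf
    · by_contra hne'
      exact Nat.find_min hex hjm ⟨hlt, lt_trans hjm hm2, hne'⟩
  have hcol : w.ColliderAt m := by
    refine w.colliderAt_of (by omega) (by rw [w.hlen]; omega) ?_ hm3
    · have : w.kind (m - 1) = .fwd := hrun (m - 1) (by omega) (by omega)
      rw [this]; intro hc; cases hc
  obtain ⟨d, hd, hanc⟩ := (hconn m (by omega) (by rw [w.hlen]; omega)).1 hcol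
  exact ⟨d, hd, Relation.ReflTransGen.trans
    (w.anc_fwd_of (le_of_lt hm1) (le_of_lt hm2) hrun) hanc⟩

/-- From a backward edge at `j` with an earlier non-backward edge, the vertex `j+1`
has a descendant in `Z` (on a `Conn` walk). -/
lemma bwd_desc {Z : Set V} {w : G.Walk x y} (hconn : w.Conn Z) {k j : ℕ} (hkj : k < j)
    (hj : j < w.kinds.length) (hb : w.kind j = .bwd) (hne : w.kind k ≠ .bwd) :
    ∃ d ∈ Z, G.Ancestor (w.vert (j + 1)) d := by
  classical
  set Q : ℕ → Prop := fun m => w.kind m ≠ .bwd with hQdef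
  have hm : Q (Nat.findGreatest Q (j - 1)) :=
    Nat.findGreatest_spec (m := k) (by omega) hne
  set m := Nat.findGreatest Q (j - 1) with hmdef
  have hmle : m ≤ j - 1 := Nat.findGreatest_le _
  have hrun : ∀ t, m + 1 ≤ t → t < j + 1 → w.kind t = .bwd := by
    intro t h1 h2
    rcases eq_or_lt_of_le (show t ≤ j by omega) with rfl | hlt
    · exact hb
    · by_contra hne'
      exact Nat.findGreatest_is_greatest (show m < t by omega) (show t ≤ j - 1 by omega) hne'
  have hcol : w.ColliderAt (m + 1) := by
    refine w.colliderAt_of (by omega) (by rw [w.hlen]; omega) ?_ ?_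
    · simpa using hm
    · rw [hrun (m + 1) le_rfl (by omega)]; intro hc; cases hc
  obtain ⟨d, hd, hanc⟩ := (hconn (m + 1) (by omega) (by rw [w.hlen]; omega)).1 hcol
  refine ⟨d, hd, Relation.ReflTransGen.trans ?_ hanc⟩
  exact w.anc_bwd_of (a := m + 1) (b := j + 1) (by omega) (by omega) hrun

lemma fwd_escape {Z : Set V} {w : G.Walk x y} (hconn : w.Conn Z) {i : ℕ}
    (hi : i < w.kinds.length) (hf : w.kind i = .fwd) :
    (∃ d ∈ Z, G.Ancestor (w.vert i) d) ∨ G.Ancestor (w.vert i) y := by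
  by_cases hex : ∃ k, i < k ∧ k < w.kinds.length ∧ w.kind k ≠ .fwd
  · obtain ⟨k, h1, h2, h3⟩ := hex
    exact Or.inl (fwd_desc hconn h1 h2 hf h3)
  · right
    push_neg at hex
    have hrun : ∀ k, i ≤ k → k < w.kinds.length → w.kind k = .fwd := by
      intro k h1 h2
      rcases eq_or_lt_of_le h1 with rfl | hlt
      · exact hf
      · exact hex k hlt h2
    have h2 := w.anc_fwd_of (a := i) (b := w.kinds.length) (le_of_lt hi) le_rfl hrun
    have hkl : w.kinds.length = w.verts.length - 1 := by rw [w.hlen]; omega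
    rw [hkl] at h2
    rwa [w.vert_last] at h2

lemma bwd_escape {Z : Set V} {w : G.Walk x y} (hconn : w.Conn Z) {j : ℕ}
    (hj : j < w.kinds.length) (hb : w.kind j = .bwd) :
    (∃ d ∈ Z, G.Ancestor (w.vert (j + 1)) d) ∨ G.Ancestor (w.vert (j + 1)) x := by
  by_cases hex : ∃ k, k < j ∧ w.kind k ≠ .bwd
  · obtain ⟨k, h1, h3⟩ := hex
    exact Or.inl (bwd_desc hconn h1 hj hb h3)
  · right
    push_neg at hex
    have hrun : ∀ k, 0 ≤ k → k < j + 1 → w.kind k = .bwd := by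
      intro k _ h2
      rcases eq_or_lt_of_le (show k ≤ j by omega) with rfl | hlt
      · exact hb
      · exact hex k hlt
    have := w.anc_bwd_of (a := 0) (b := j + 1) (by omega) (by omega) hrun
    rwa [w.vert_zero] at this

end Walk

end MGraph
namespace MGraph

variable {V : Type} {G : MGraph V} {x y v : V}

namespace Walk

/-- The prefix of a walk up to position `m`. -/
def prefixW (w : G.Walk x y) (m : ℕ) (hm : m < w.verts.length) (hv : w.vert m = v) :
    G.Walk x v where
  verts := w.verts.take (m + 1)
  kinds := w.kinds.take m
  len_eq := by
    rw [List.length_take, List.length_take]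
    have := w.hlen; omega
  head_eq := by
    rw [List.head?_eq_getElem?, List.getElem?_take, if_pos (by omega : 0 < m + 1),
      ← List.head?_eq_getElem?, w.head_eq]
  last_eq := by
    rw [List.getLast?_eq_getElem?, List.length_take]
    have hmin : min (m + 1) w.verts.length = m + 1 := by omega
    rw [hmin, List.getElem?_take, if_pos (by omega : m + 1 - 1 < m + 1)]
    show w.verts[m]? = some v
    rw [List.getElem?_eq_getElem hm]
    rw [← hv, vert, getD_eq_get' _ _ hm]
  valid := by
    intro i hi
    rw [List.length_take] at hi
    have hi' : i < w.kinds.length := by omega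
    have him : i < m := by omega
    have h1 : (w.kinds.take m).getD i .fwd = w.kinds.getD i .fwd := getD_take' _ _ him
    have h2 : (w.verts.take (m + 1)).getD i x = w.verts.getD i x := getD_take' _ _ (by omega)
    have h3 : (w.verts.take (m + 1)).getD (i + 1) x = w.verts.getD (i + 1) x :=
      getD_take' _ _ (by omega)
    rw [h1, h2, h3]
    exact w.valid i hi'

lemma prefixW_vert (w : G.Walk x y) {m : ℕ} (hm : m < w.verts.length) (hv : w.vert m = v)
    {k : ℕ} (hk : k ≤ m) : (w.prefixW m hm hv).vert k = w.vert k := by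
  show (w.verts.take (m + 1)).getD k x = w.verts.getD k x
  exact getD_take' _ _ (by omega)

lemma prefixW_kind (w : G.Walk x y) {m : ℕ} (hm : m < w.verts.length) (hv : w.vert m = v)
    {k : ℕ} (hk : k < m) : (w.prefixW m hm hv).kind k = w.kind k := by
  show (w.kinds.take m).getD k .fwd = w.kinds.getD k .fwd
  exact getD_take' _ _ hk

lemma prefixW_len (w : G.Walk x y) {m : ℕ} (hm : m < w.verts.length) (hv : w.vert m = v) :
    (w.prefixW m hm hv).verts.length = m + 1 := by
  show (w.verts.take (m + 1)).length = m + 1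
  rw [List.length_take]; omega

lemma prefixW_klen (w : G.Walk x y) {m : ℕ} (hm : m < w.verts.length) (hv : w.vert m = v) :
    (w.prefixW m hm hv).kinds.length = m := by
  show (w.kinds.take m).length = m
  rw [List.length_take]
  have := w.hlen; omega

/-- The suffix of a walk from position `m`. -/
def suffix (w : G.Walk x y) (m : ℕ) (hm : m < w.verts.length) (hv : w.vert m = v) :
    G.Walk v y where
  verts := w.verts.drop m
  kinds := w.kinds.drop m
  len_eq := by
    rw [List.length_drop, List.length_drop]
    have := w.hlen; omega
  head_eq := by
    rw [List.head?_eq_getElem?, List.getElem?_drop, Nat.add_zero, List.getElem?_eq_getElem hm,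
      ← hv, vert, getD_eq_get' _ _ hm]
  last_eq := by
    rw [List.getLast?_eq_getElem?, List.length_drop, List.getElem?_drop]
    have h1 : m + (w.verts.length - m - 1) = w.verts.length - 1 := by omega
    rw [h1, ← List.getLast?_eq_getElem?, w.last_eq]
  valid := by
    intro i hi
    rw [List.length_drop] at hi
    have h1 : (w.kinds.drop m).getD i .fwd = w.kinds.getD (m + i) .fwd := getD_drop' _ _ _ _
    have h2 : (w.verts.drop m).getD i v = w.verts.getD (m + i) v := getD_drop' _ _ _ _
    have h3 : (w.verts.drop m).getD (i + 1) v = w.verts.getD (m + (i + 1)) v := getD_drop' _ _ _ _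
    rw [h1, h2, h3]
    have hmi : m + i < w.kinds.length := by omega
    have e2 : w.verts.getD (m + i) v = w.verts.getD (m + i) x :=
      getD_congr' _ (by rw [w.hlen]; omega) _ _
    have e3 : w.verts.getD (m + (i + 1)) v = w.verts.getD (m + (i + 1)) x :=
      getD_congr' _ (by rw [w.hlen]; omega) _ _
    rw [e2, e3, show m + (i + 1) = (m + i) + 1 by omega]
    exact w.valid (m + i) hmi

lemma suffix_vert (w : G.Walk x y) {m : ℕ} (hm : m < w.verts.length) (hv : w.vert m = v)
    {k : ℕ} (hk : k < w.verts.length - m) : (w.suffix m hm hv).vert k = w.vert (m + k) := by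
  show (w.verts.drop m).getD k v = w.verts.getD (m + k) x
  rw [getD_drop' _ _ _ _]
  exact getD_congr' _ (by omega) _ _

lemma suffix_kind (w : G.Walk x y) {m : ℕ} (hm : m < w.verts.length) (hv : w.vert m = v)
    (k : ℕ) : (w.suffix m hm hv).kind k = w.kind (m + k) := by
  show (w.kinds.drop m).getD k .fwd = w.kinds.getD (m + k) .fwd
  exact getD_drop' _ _ _ _

lemma suffix_len (w : G.Walk x y) {m : ℕ} (hm : m < w.verts.length) (hv : w.vert m = v) :
    (w.suffix m hm hv).verts.length = w.verts.length - m := by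
  show (w.verts.drop m).length = _
  rw [List.length_drop]

lemma suffix_klen (w : G.Walk x y) {m : ℕ} (hm : m < w.verts.length) (hv : w.vert m = v) :
    (w.suffix m hm hv).kinds.length = w.kinds.length - m := by
  show (w.kinds.drop m).length = _
  rw [List.length_drop]

/-- Concatenation of walks. -/
def append (w1 : G.Walk x v) (w2 : G.Walk v y) : G.Walk x y where
  verts := w1.verts ++ w2.verts.tail
  kinds := w1.kinds ++ w2.kinds
  len_eq := by
    rw [List.length_append, List.length_append, List.length_tail]
    have := w1.hlen; have := w2.hlen; omega
  head_eq := by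
    rw [List.head?_eq_getElem?, List.getElem?_append_left (by have := w1.hlen; omega),
      ← List.head?_eq_getElem?, w1.head_eq]
  last_eq := by
    rcases Nat.eq_zero_or_pos w2.kinds.length with h0 | hpos
    · have hlen2 : w2.verts.length = 1 := by rw [w2.hlen, h0]
      have htail : w2.verts.tail = [] := by
        rw [← List.length_eq_zero_iff]; rw [List.length_tail, hlen2]
      have hvy : v = y := by
        have h1 := w2.vert_zero
        have h2 := w2.vert_last
        rw [hlen2] at h2
        exact h1.symm.trans (by simpa using h2)
      rw [htail, List.append_nil, w1.last_eq, hvy]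
    · have htail : w2.verts.tail ≠ [] := by
        intro hc
        have := List.length_tail (l := w2.verts)
        rw [hc] at this
        simp at this
        rw [w2.hlen] at this; omega
      rw [List.getLast?_append_of_ne_nil _ htail]
      rw [List.getLast?_eq_getElem?, List.length_tail, List.getElem?_tail,
        show w2.verts.length - 1 - 1 + 1 = w2.verts.length - 1 by rw [w2.hlen]; omega,
        ← List.getLast?_eq_getElem?, w2.last_eq]
  valid := by
    intro i hi
    rw [List.length_append] at hi
    have hl1 := w1.hlen
    have hl2 := w2.hlen
    rcases Nat.lt_or_ge i w1.kinds.length with hlo | hhi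
    · have e1 : (w1.kinds ++ w2.kinds).getD i .fwd = w1.kinds.getD i .fwd :=
        getD_append_left' _ _ _ hlo
      have e2 : (w1.verts ++ w2.verts.tail).getD i x = w1.verts.getD i x :=
        getD_append_left' _ _ _ (by omega)
      have e3 : (w1.verts ++ w2.verts.tail).getD (i + 1) x = w1.verts.getD (i + 1) x :=
        getD_append_left' _ _ _ (by omega)
      rw [e1, e2, e3]
      exact w1.valid i hlo
    · have e1 : (w1.kinds ++ w2.kinds).getD i .fwd = w2.kinds.getD (i - w1.kinds.length) .fwd :=
        getD_append_right' _ _ _ hhi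
      have hsub : i - w1.kinds.length < w2.kinds.length := by omega
      -- second vertex
      have e3 : (w1.verts ++ w2.verts.tail).getD (i + 1) x
          = w2.verts.getD (i - w1.kinds.length + 1) x := by
        rw [getD_append_right' _ _ _ (by omega)]
        show (w2.verts.tail).getD (i + 1 - w1.verts.length) x = _
        rw [List.getD_eq_getElem?_getD, List.getD_eq_getElem?_getD, List.getElem?_tail,
          show i + 1 - w1.verts.length + 1 = i - w1.kinds.length + 1 by omega]
      -- first vertex
      have e2 : (w1.verts ++ w2.verts.tail).getD i x = w2.verts.getD (i - w1.kinds.length) x := by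
        rcases eq_or_lt_of_le hhi with heq | hlt
        · -- i = w1.kinds.length : last of w1 = head of w2
          rw [getD_append_left' _ _ _ (by omega)]
          have hv1 : w1.verts.getD i x = v := by
            have h := w1.vert_last
            rw [w1.hlen] at h
            simp only [Nat.add_sub_cancel] at h
            rw [← heq]
            exact h
          have hv2 : w2.verts.getD (i - w1.kinds.length) x = v := by
            rw [← heq, Nat.sub_self, getD_congr' w2.verts (by rw [w2.hlen]; omega) x v]
            exact w2.vert_zero
          rw [hv1, hv2]
        · rw [getD_append_right' _ _ _ (by omega)]
          show (w2.verts.tail).getD (i - w1.verts.length) x = _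
          rw [List.getD_eq_getElem?_getD, List.getD_eq_getElem?_getD, List.getElem?_tail,
            show i - w1.verts.length + 1 = i - w1.kinds.length by omega]
      rw [e1, e2, e3]
      have e4 : w2.verts.getD (i - w1.kinds.length) x
          = w2.verts.getD (i - w1.kinds.length) v := getD_congr' _ (by omega) _ _
      have e5 : w2.verts.getD (i - w1.kinds.length + 1) x
          = w2.verts.getD (i - w1.kinds.length + 1) v := getD_congr' _ (by omega) _ _
      rw [e4, e5]
      exact w2.valid _ hsub

lemma append_klen (w1 : G.Walk x v) (w2 : G.Walk v y) :
    (w1.append w2).kinds.length = w1.kinds.length + w2.kinds.length := by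
  show (w1.kinds ++ w2.kinds).length = _
  rw [List.length_append]

lemma append_len (w1 : G.Walk x v) (w2 : G.Walk v y) :
    (w1.append w2).verts.length = w1.verts.length + w2.verts.length - 1 := by
  show (w1.verts ++ w2.verts.tail).length = _
  rw [List.length_append, List.length_tail]
  have := w2.hlen; omega

lemma append_kind_lo (w1 : G.Walk x v) (w2 : G.Walk v y) {k : ℕ} (hk : k < w1.kinds.length) :
    (w1.append w2).kind k = w1.kind k := by
  show (w1.kinds ++ w2.kinds).getD k .fwd = w1.kinds.getD k .fwd
  exact getD_append_left' _ _ _ hk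

lemma append_kind_hi (w1 : G.Walk x v) (w2 : G.Walk v y) {k : ℕ} (hk : w1.kinds.length ≤ k) :
    (w1.append w2).kind k = w2.kind (k - w1.kinds.length) := by
  show (w1.kinds ++ w2.kinds).getD k .fwd = w2.kinds.getD (k - w1.kinds.length) .fwd
  exact getD_append_right' _ _ _ hk

lemma append_vert_lo (w1 : G.Walk x v) (w2 : G.Walk v y) {k : ℕ} (hk : k < w1.verts.length) :
    (w1.append w2).vert k = w1.vert k := by
  show (w1.verts ++ w2.verts.tail).getD k x = w1.verts.getD k x
  exact getD_append_left' _ _ _ hk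

lemma append_vert_hi (w1 : G.Walk x v) (w2 : G.Walk v y) {k : ℕ} (hk : w1.kinds.length ≤ k)
    (hk2 : k - w1.kinds.length < w2.verts.length) :
    (w1.append w2).vert k = w2.vert (k - w1.kinds.length) := by
  have hl1 := w1.hlen
  rcases eq_or_lt_of_le hk with heq | hlt
  · subst heq
    show (w1.verts ++ w2.verts.tail).getD w1.kinds.length x
      = w2.verts.getD (w1.kinds.length - w1.kinds.length) v
    rw [Nat.sub_self, getD_append_left' _ _ _ (by omega)]
    have h1 : w1.verts.getD w1.kinds.length x = v := by
      have h := w1.vert_last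
      rw [w1.hlen] at h
      simp only [Nat.add_sub_cancel] at h
      exact h
    rw [h1]
    exact w2.vert_zero.symm
  · show (w1.verts ++ w2.verts.tail).getD k x = w2.verts.getD (k - w1.kinds.length) v
    rw [getD_append_right' _ _ _ (by omega)]
    rw [List.getD_eq_getElem?_getD, List.getD_eq_getElem?_getD, List.getElem?_tail,
      show k - w1.verts.length + 1 = k - w1.kinds.length by omega,
      List.getElem?_eq_getElem hk2]
    simp

end Walk

end MGraph
namespace MGraph

variable {V : Type} {G : MGraph V}

/-- A directed chain list witnessing ancestry. -/
lemma exists_chain {a b : V} (h : G.Ancestor a b) :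
    ∃ l : List V, l.head? = some a ∧ l.getLast? = some b ∧ l.Chain' G.dir := by
  induction h with
  | refl => exact ⟨[a], rfl, rfl, List.isChain_singleton a⟩
  | @tail c c' hab hbc ih =>
    obtain ⟨l, hh, hl, hch⟩ := ih
    have hne : l ≠ [] := ne_nil_of_head? l hh
    refine ⟨l ++ [c'], ?_, by simp, ?_⟩
    · rw [List.head?_append_of_ne_nil _ hne]  -- maybe wrong name
      exact hh
    · show List.IsChain G.dir (l ++ [c'])
      rw [List.isChain_append]
      refine ⟨hch, List.isChain_singleton c', ?_⟩
      intro p hp q hq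
      simp at hq
      subst hq
      rw [hl] at hp
      simp at hp
      subst hp
      exact hbc

namespace Walk

/-- The all-forward walk along a directed chain. -/
def ofChain (l : List V) {a b : V} (hh : l.head? = some a) (hl : l.getLast? = some b)
    (hch : l.Chain' G.dir) : G.Walk a b where
  verts := l
  kinds := List.replicate (l.length - 1) .fwd
  len_eq := by
    rw [List.length_replicate]
    have : l ≠ [] := ne_nil_of_head? l hh
    have : 0 < l.length := List.length_pos_iff.mpr this
    omega
  head_eq := hh
  last_eq := hl
  valid := by
    intro i hi
    rw [List.length_replicate] at hi
    rw [getD_replicate']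
    show G.dir (l.getD i a) (l.getD (i + 1) a)
    exact chain'_getD hch a (by omega)

/-- The all-backward walk along a reversed directed chain. -/
def ofChainRev (l : List V) {a b : V} (hh : l.head? = some a) (hl : l.getLast? = some b)
    (hch : l.Chain' G.dir) : G.Walk b a where
  verts := l.reverse
  kinds := List.replicate (l.length - 1) .bwd
  len_eq := by
    rw [List.length_replicate, List.length_reverse]
    have : l ≠ [] := ne_nil_of_head? l hh
    have : 0 < l.length := List.length_pos_iff.mpr this
    omega
  head_eq := by rw [List.head?_reverse]; exact hl
  last_eq := by rw [List.getLast?_reverse]; exact hh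
  valid := by
    intro i hi
    rw [List.length_replicate] at hi
    have hlr : l.reverse.length = l.length := List.length_reverse (as := l)
    have h1 : l.reverse.getD i b = l.getD (l.length - 1 - i) b := by
      rw [getD_eq_get' _ _ (by omega), getD_eq_get' _ _ (by omega)]
      exact List.getElem_reverse _
    have h2 : l.reverse.getD (i + 1) b = l.getD (l.length - 1 - (i + 1)) b := by
      rw [getD_eq_get' _ _ (by omega), getD_eq_get' _ _ (by omega)]
      exact List.getElem_reverse _
    rw [getD_replicate_lt' _ _ _ hi]
    show G.dir (l.reverse.getD (i + 1) b) (l.reverse.getD i b)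
    rw [h1, h2]
    have := chain'_getD hch b (i := l.length - 1 - (i + 1)) (by omega)
    rwa [show l.length - 1 - (i + 1) + 1 = l.length - 1 - i by omega] at this

/-- Every vertex on a directed chain is a descendant of its head. -/
lemma chain_anc {l : List V} (hch : l.Chain' G.dir) {a : V} (hh : l.head? = some a) (d : V) :
    ∀ k, k < l.length → G.Ancestor a (l.getD k d) := by
  intro k
  induction k with
  | zero =>
    intro hk
    rw [head?_eq_getD l d hh]
    exact Relation.ReflTransGen.refl
  | succ k ih =>
    intro hk
    exact (ih (by omega)).tail (chain'_getD hch d hk)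

end Walk

end MGraph
namespace EKind

lemma eq_fwd_of_not_arrowLeft {k : EKind} (h : ¬ k.arrowLeft) : k = .fwd := by
  cases k <;> simp_all [arrowLeft]

lemma eq_bwd_of_not_arrowRight {k : EKind} (h : ¬ k.arrowRight) : k = .bwd := by
  cases k <;> simp_all [arrowRight]

end EKind

namespace MGraph

namespace Walk

variable {V : Type} {G : MGraph V} {x y v : V}

lemma suffix_colliderAt (w : G.Walk x y) {m : ℕ} (hm : m < w.verts.length)
    (hv : w.vert m = v) {k : ℕ} (h1 : 1 ≤ k) (h2 : k + 1 < w.verts.length - m) :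
    (w.suffix m hm hv).ColliderAt k ↔ w.ColliderAt (m + k) := by
  have e1 : (w.suffix m hm hv).kind (k - 1) = w.kind (m + k - 1) := by
    rw [suffix_kind, show m + (k - 1) = m + k - 1 by omega]
  have e2 : (w.suffix m hm hv).kind k = w.kind (m + k) := suffix_kind w hm hv k
  unfold ColliderAt
  rw [e1, e2, suffix_len]
  constructor
  · rintro ⟨hA, hB, hC, hD⟩; exact ⟨by omega, by omega, hC, hD⟩
  · rintro ⟨hA, hB, hC, hD⟩; exact ⟨h1, by omega, hC, hD⟩

lemma prefixW_colliderAt (w : G.Walk x y) {m : ℕ} (hm : m < w.verts.length)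
    (hv : w.vert m = v) {k : ℕ} (h1 : 1 ≤ k) (h2 : k + 1 < m + 1) :
    (w.prefixW m hm hv).ColliderAt k ↔ w.ColliderAt k := by
  have e1 : (w.prefixW m hm hv).kind (k - 1) = w.kind (k - 1) :=
    prefixW_kind w hm hv (by omega)
  have e2 : (w.prefixW m hm hv).kind k = w.kind k := prefixW_kind w hm hv (by omega)
  unfold ColliderAt
  rw [e1, e2, prefixW_len]
  constructor
  · rintro ⟨hA, hB, hC, hD⟩; exact ⟨by omega, by omega, hC, hD⟩
  · rintro ⟨hA, hB, hC, hD⟩; exact ⟨h1, h2, hC, hD⟩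

lemma suffix_conn {Z : Set V} {w : G.Walk x y} (hconn : w.Conn Z) {m : ℕ}
    (hm : m < w.verts.length) (hv : w.vert m = v) : (w.suffix m hm hv).Conn Z := by
  intro k h1 h2
  rw [suffix_len] at h2
  have hvk : (w.suffix m hm hv).vert k = w.vert (m + k) := suffix_vert w hm hv (by omega)
  have hck := suffix_colliderAt w hm hv h1 h2
  constructor
  · intro hc
    rw [hvk]
    exact (hconn (m + k) (by omega) (by omega)).1 (hck.mp hc)
  · intro hc
    rw [hvk]
    exact (hconn (m + k) (by omega) (by omega)).2 (fun hcc => hc (hck.mpr hcc))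

lemma prefixW_conn {Z : Set V} {w : G.Walk x y} (hconn : w.Conn Z) {m : ℕ}
    (hm : m < w.verts.length) (hv : w.vert m = v) : (w.prefixW m hm hv).Conn Z := by
  intro k h1 h2
  rw [prefixW_len] at h2
  have hvk : (w.prefixW m hm hv).vert k = w.vert k := prefixW_vert w hm hv (by omega)
  have hck := prefixW_colliderAt w hm hv h1 h2
  constructor
  · intro hc
    rw [hvk]
    exact (hconn k (by omega) (by omega)).1 (hck.mp hc)
  · intro hc
    rw [hvk]
    exact (hconn k (by omega) (by omega)).2 (fun hcc => hc (hck.mpr hcc))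

end Walk

end MGraph
namespace MGraph

namespace Walk

variable {V : Type} {G : MGraph V} {x y : V}

/-- Any walk m-connecting given `Z` yields a path m-connecting given `Z`. -/
lemma exists_path_of_conn {Z : Set V} :
    ∀ (n : ℕ) (w : G.Walk x y), w.verts.length ≤ n → w.Conn Z →
      ∃ p : G.Path x y, p.MConn Z := by
  intro n
  induction n with
  | zero =>
    intro w hle _
    have := w.hlen; omega
  | succ n ih =>
    intro w hle hconn
    by_cases hnd : w.verts.Nodup
    · exact ⟨⟨w.verts, w.kinds, w.len_eq, hnd, w.head_eq, w.last_eq, w.valid⟩, hconn⟩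
    · obtain ⟨i, j, hij, hjlen, hdup⟩ := exists_dup_of_not_nodup x hnd
      have hlen := w.hlen
      change w.vert i = w.vert j at hdup
      by_cases hvx : w.vert j = x
      · -- cut everything before the second occurrence of x
        have hj1 : 1 ≤ j := by omega
        refine ih (w.suffix j hjlen hvx) ?_ (suffix_conn hconn hjlen hvx)
        rw [suffix_len]; omega
      · by_cases hvy : w.vert i = y
        · -- cut everything after the first occurrence of y
          have hiv : i < w.verts.length := by omega
          refine ih (w.prefixW i hiv hvy) ?_ (prefixW_conn hconn hiv hvy)
          rw [prefixW_len]; omega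
        · -- splice out the loop between positions i and j
          have hi1 : 1 ≤ i := by
            rcases Nat.eq_zero_or_pos i with rfl | h
            · exact absurd (hdup.symm.trans w.vert_zero) hvx
            · exact h
          have hjy : j + 1 < w.verts.length := by
            rcases eq_or_lt_of_le (show j + 1 ≤ w.verts.length by omega) with heq | h
            · exfalso
              apply hvy
              rw [hdup, show j = w.verts.length - 1 by omega]
              exact w.vert_last
            · exact h
          have hiv : i < w.verts.length := by omega
          set w1 := w.prefixW i hiv rfl with hw1
          set w2 := w.suffix j hjlen hdup.symm with hw2
          set w' := w1.append w2 with hw'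
          have hk1 : w1.kinds.length = i := prefixW_klen w hiv rfl
          have hl1 : w1.verts.length = i + 1 := prefixW_len w hiv rfl
          have hl2 : w2.verts.length = w.verts.length - j := suffix_len w hjlen hdup.symm
          have hlw' : w'.verts.length = i + (w.verts.length - j) := by
            rw [hw', append_len, hl1, hl2]; omega
          have hkw' : w'.kinds.length = i + (w.kinds.length - j) := by
            rw [hw', append_klen, hk1, suffix_klen]
          -- index transfer lemmas
          have hkind_lo : ∀ k, k < i → w'.kind k = w.kind k := by
            intro k hk
            rw [hw', append_kind_lo _ _ (by rw [hk1]; exact hk)]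
            exact prefixW_kind w hiv rfl hk
          have hkind_hi : ∀ k, i ≤ k → w'.kind k = w.kind (j + (k - i)) := by
            intro k hk
            rw [hw', append_kind_hi _ _ (by rw [hk1]; exact hk), hk1]
            exact suffix_kind w hjlen hdup.symm (k - i)
          have hvert_lo : ∀ k, k ≤ i → w'.vert k = w.vert k := by
            intro k hk
            rw [hw', append_vert_lo _ _ (by rw [hl1]; omega)]
            exact prefixW_vert w hiv rfl hk
          have hvert_hi : ∀ k, i ≤ k → k < i + (w.verts.length - j) → w'.vert k = w.vert (j + (k - i)) := by
            intro k hk hk2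
            rw [hw', append_vert_hi _ _ (by rw [hk1]; exact hk) (by rw [hk1, hl2]; omega), hk1]
            exact suffix_vert w hjlen hdup.symm (by omega)
          refine ih w' (by omega) ?_
          -- Conn of the spliced walk
          intro m h1 h2
          rw [hlw'] at h2
          rcases lt_trichotomy m i with hmi | hmi | hmi
          · -- prefix region
            have e1 : w'.kind (m - 1) = w.kind (m - 1) := hkind_lo _ (by omega)
            have e2 : w'.kind m = w.kind m := hkind_lo _ hmi
            have ev : w'.vert m = w.vert m := hvert_lo _ (by omega)
            have hcol : w'.ColliderAt m ↔ w.ColliderAt m := by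
              unfold ColliderAt
              rw [e1, e2, hlw']
              constructor
              · rintro ⟨hA, hB, hC, hD⟩; exact ⟨by omega, by omega, hC, hD⟩
              · rintro ⟨hA, hB, hC, hD⟩; exact ⟨h1, h2, hC, hD⟩
            constructor
            · intro hc; rw [ev]; exact (hconn m h1 (by omega)).1 (hcol.mp hc)
            · intro hc; rw [ev]; exact (hconn m h1 (by omega)).2 (fun hcc => hc (hcol.mpr hcc))
          · -- junction
            subst hmi
            have e1 : w'.kind (m - 1) = w.kind (m - 1) := hkind_lo _ (by omega)
            have e2 : w'.kind m = w.kind j := by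
              rw [hkind_hi m le_rfl, Nat.sub_self, Nat.add_zero]
            have ev : w'.vert m = w.vert m := hvert_lo _ le_rfl
            have hcol : w'.ColliderAt m ↔
                ((w.kind (m - 1)).arrowRight ∧ (w.kind j).arrowLeft) := by
              unfold ColliderAt
              rw [e1, e2, hlw']
              constructor
              · rintro ⟨hA, hB, hC, hD⟩; exact ⟨hC, hD⟩
              · rintro ⟨hC, hD⟩; exact ⟨h1, h2, hC, hD⟩
            constructor
            · intro hc
              obtain ⟨hA, hB⟩ := hcol.mp hc
              rw [ev]
              by_cases hBi : (w.kind m).arrowLeft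
              · exact (hconn m h1 (by omega)).1 ⟨h1, by omega, hA, hBi⟩
              · have hfi : w.kind m = .fwd := EKind.eq_fwd_of_not_arrowLeft hBi
                by_cases hAj : (w.kind (j - 1)).arrowRight
                · have hd := (hconn j (by omega) (by omega)).1 ⟨by omega, by omega, hAj, hB⟩
                  rw [hdup]; exact hd
                · have hbj : w.kind (j - 1) = .bwd := EKind.eq_bwd_of_not_arrowRight hAj
                  have hmj : m < j - 1 := by
                    rcases eq_or_lt_of_le (show m ≤ j - 1 by omega) with heq | h
                    · rw [heq, hbj] at hfi; cases hfi
                    · exact h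
                  exact fwd_desc hconn hmj (by omega) hfi (by rw [hbj]; intro hc'; cases hc')
            · intro hnc
              have hnAB : ¬ ((w.kind (m - 1)).arrowRight ∧ (w.kind j).arrowLeft) :=
                fun hab => hnc (hcol.mpr hab)
              rw [ev]
              by_cases hA : (w.kind (m - 1)).arrowRight
              · have hB : ¬ (w.kind j).arrowLeft := fun hB => hnAB ⟨hA, hB⟩
                have hfj : w.kind j = .fwd := EKind.eq_fwd_of_not_arrowLeft hB
                have hd := (hconn j (by omega) (by omega)).2 (w.not_colliderAt_right hfj)
                rw [hdup]; exact hd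
              · have hbw : w.kind (m - 1) = .bwd := EKind.eq_bwd_of_not_arrowRight hA
                exact (hconn m h1 (by omega)).2 (w.not_colliderAt_left hbw)
          · -- suffix region
            set t := j + (m - i) with ht
            have e1 : w'.kind (m - 1) = w.kind (t - 1) := by
              rw [hkind_hi (m - 1) (by omega), show j + (m - 1 - i) = t - 1 by omega]
            have e2 : w'.kind m = w.kind t := by
              rw [hkind_hi m (by omega)]
            have ev : w'.vert m = w.vert t := hvert_hi m (by omega) (by omega)
            have hcol : w'.ColliderAt m ↔ w.ColliderAt t := by
              unfold ColliderAt
              rw [e1, e2, hlw']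
              constructor
              · rintro ⟨hA, hB, hC, hD⟩; exact ⟨by omega, by omega, hC, hD⟩
              · rintro ⟨hA, hB, hC, hD⟩; exact ⟨h1, h2, hC, hD⟩
            constructor
            · intro hc; rw [ev]; exact (hconn t (by omega) (by omega)).1 (hcol.mp hc)
            · intro hc; rw [ev]; exact (hconn t (by omega) (by omega)).2 (fun hcc => hc (hcol.mpr hcc))

end Walk

end MGraph
namespace MGraph

namespace Walk

variable {V : Type} {G : MGraph V} {x y : V}

/-- The set of "bad" colliders of a walk: colliders with no descendant in `Z`. -/
def badSet (w : G.Walk x y) (Z : Set V) : Set ℕ :=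
  {m | w.ColliderAt m ∧ ¬ ∃ d ∈ Z, G.Ancestor (w.vert m) d}

lemma badSet_finite (w : G.Walk x y) (Z : Set V) : (w.badSet Z).Finite :=
  (Set.finite_Iio w.verts.length).subset (fun m hm => by
    have := hm.1.2.1
    exact Set.mem_Iio.mpr (by omega))

lemma conn_of_badSet_empty {Z : Set V} {w : G.Walk x y} (hgood : w.Good Z)
    (hS : w.badSet Z = ∅) : w.Conn Z := by
  intro m h1 h2
  refine ⟨?_, (hgood m h1 h2).2⟩
  intro hcol
  by_contra hno
  have : m ∈ w.badSet Z := ⟨hcol, hno⟩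
  rw [hS] at this
  exact this

lemma ofChain_kind {l : List V} {a b : V} (hh : l.head? = some a) (hl : l.getLast? = some b)
    (hch : l.Chain' G.dir) (k : ℕ) : (ofChain l hh hl hch).kind k = .fwd :=
  getD_replicate' _ _ _

lemma exists_conn_of_good {Z : Set V} :
    ∀ (n : ℕ) (w : G.Walk x y), (w.badSet Z).ncard ≤ n → w.Good Z →
      ∃ w' : G.Walk x y, w'.Conn Z := by
  intro n
  induction n with
  | zero =>
    intro w hcard hgood
    refine ⟨w, conn_of_badSet_empty hgood ?_⟩
    rw [← Set.ncard_eq_zero (badSet_finite w Z)]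
    omega
  | succ n ih =>
    intro w hcard hgood
    by_cases hS : w.badSet Z = ∅
    · exact ⟨w, conn_of_badSet_empty hgood hS⟩
    · have hfin := badSet_finite w Z
      obtain ⟨m, hmS, hmax⟩ := Set.exists_max_image (w.badSet Z) id hfin
        (Set.nonempty_iff_ne_empty.mpr hS)
      simp only [id] at hmax
      obtain ⟨hmcol, hmno⟩ := hmS
      have hm1 : 1 ≤ m := hmcol.1
      have hm2 : m + 1 < w.verts.length := hmcol.2.1
      have hlen := w.hlen
      have hm : m < w.verts.length := by omega
      have hmnotZ : w.vert m ∉ Z := fun hin =>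
        hmno ⟨w.vert m, hin, Relation.ReflTransGen.refl⟩
      rcases (hgood m hm1 hm2).1 hmcol with hd | hax | hay
      · exact absurd hd hmno
      · -- vert m is an ancestor of x : prepend the reversed chain, drop the prefix
        obtain ⟨l, hh, hl, hch⟩ := exists_chain hax
        have hlne : l ≠ [] := ne_nil_of_head? l hh
        have hlpos : 0 < l.length := List.length_pos_iff.mpr hlne
        set c := l.length with hc
        set w1 := ofChainRev l hh hl hch with hw1
        set w2 := w.suffix m hm rfl with hw2
        set w' := w1.append w2 with hw'
        have hk1 : w1.kinds.length = c - 1 := by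
          show (List.replicate (l.length - 1) EKind.bwd).length = c - 1
          rw [List.length_replicate]
        have hl1 : w1.verts.length = c := by
          show l.reverse.length = c
          rw [List.length_reverse]
        have hl2 : w2.verts.length = w.verts.length - m := suffix_len w hm rfl
        have hlw' : w'.verts.length = (c - 1) + (w.verts.length - m) := by
          rw [hw', append_len, hl1, hl2]
          omega
        have hkw' : w'.kinds.length = (c - 1) + (w.kinds.length - m) := by
          rw [hw', append_klen, hk1, suffix_klen]
        have hkind_lo : ∀ k, k < c - 1 → w'.kind k = .bwd := by
          intro k hk
          rw [hw', append_kind_lo _ _ (by rw [hk1]; exact hk)]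
          show (List.replicate (l.length - 1) EKind.bwd).getD k .fwd = .bwd
          exact getD_replicate_lt' _ _ _ hk
        have hkind_hi : ∀ k, c - 1 ≤ k → w'.kind k = w.kind (m + (k - (c - 1))) := by
          intro k hk
          rw [hw', append_kind_hi _ _ (by rw [hk1]; exact hk), hk1]
          exact suffix_kind w hm rfl _
        have hvert_lo : ∀ k, k < c → w'.vert k = l.getD (c - 1 - k) x := by
          intro k hk
          rw [hw', append_vert_lo _ _ (by rw [hl1]; exact hk)]
          show l.reverse.getD k x = l.getD (c - 1 - k) x
          rw [getD_eq_get' _ _ (by rw [List.length_reverse]; exact hk),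
            getD_eq_get' _ _ (by omega)]
          exact List.getElem_reverse _
        have hvert_hi : ∀ k, c - 1 ≤ k → k - (c - 1) < w.verts.length - m →
            w'.vert k = w.vert (m + (k - (c - 1))) := by
          intro k hk hk2
          rw [hw', append_vert_hi _ _ (by rw [hk1]; exact hk) (by rw [hk1, hl2]; exact hk2), hk1]
          exact suffix_vert w hm rfl hk2
        have hchainanc : ∀ k, k < c → G.Ancestor (w.vert m) (l.getD k x) := by
          intro k hk
          exact chain_anc hch hh x k hk
        have hchainZ : ∀ k, k < c → l.getD k x ∉ Z := by
          intro k hk hin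
          exact hmno ⟨l.getD k x, hin, hchainanc k hk⟩
        refine ⟨w', ?_⟩
        intro p h1 h2
        rw [hlw'] at h2
        rcases lt_trichotomy p (c - 1) with hpc | hpc | hpc
        · -- chain interior: backward edges, non-collider
          have hnc : ¬ w'.ColliderAt p := by
            apply w'.not_colliderAt_left
            exact hkind_lo (p - 1) (by omega)
          refine ⟨fun hcol => absurd hcol hnc, fun _ => ?_⟩
          rw [hvert_lo p (by omega)]
          exact hchainZ _ (by omega)
        · -- junction at the top of the chain
          subst hpc
          have hnc : ¬ w'.ColliderAt (c - 1) := by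
            apply w'.not_colliderAt_left
            exact hkind_lo (c - 1 - 1) (by omega)
          refine ⟨fun hcol => absurd hcol hnc, fun _ => ?_⟩
          rw [hvert_hi (c - 1) le_rfl (by omega), Nat.sub_self, Nat.add_zero]
          exact hmnotZ
        · -- suffix region
          set t := m + (p - (c - 1)) with htdef
          have htgt : m < t := by omega
          have e1 : w'.kind (p - 1) = w.kind (t - 1) := by
            rw [hkind_hi (p - 1) (by omega), show m + (p - 1 - (c - 1)) = t - 1 by omega]
          have e2 : w'.kind p = w.kind t := hkind_hi p (by omega)
          have ev : w'.vert p = w.vert t := hvert_hi p (by omega) (by omega)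
          have hcol : w'.ColliderAt p ↔ w.ColliderAt t := by
            unfold ColliderAt
            rw [e1, e2, hlw']
            constructor
            · rintro ⟨hA, hB, hC, hD⟩; exact ⟨by omega, by omega, hC, hD⟩
            · rintro ⟨hA, hB, hC, hD⟩; exact ⟨h1, by omega, hC, hD⟩
          constructor
          · intro hc
            have hct := hcol.mp hc
            rw [ev]
            by_contra hno
            have : t ∈ w.badSet Z := ⟨hct, hno⟩
            have := hmax t this
            omega
          · intro hc
            rw [ev]
            exact (hgood t (by omega) (by omega)).2 (fun hcc => hc (hcol.mpr hcc))
      · -- vert m is an ancestor of y : keep the prefix, append the chain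
        obtain ⟨l, hh, hl, hch⟩ := exists_chain hay
        have hlne : l ≠ [] := ne_nil_of_head? l hh
        have hlpos : 0 < l.length := List.length_pos_iff.mpr hlne
        set c := l.length with hc
        set w1 := w.prefixW m hm rfl with hw1
        set w2 := ofChain l hh hl hch with hw2
        set w' := w1.append w2 with hw'
        have hk1 : w1.kinds.length = m := prefixW_klen w hm rfl
        have hl1 : w1.verts.length = m + 1 := prefixW_len w hm rfl
        have hl2 : w2.verts.length = c := rfl
        have hlw' : w'.verts.length = m + c := by
          rw [hw', append_len, hl1, hl2]
          omega
        have hkind_lo : ∀ k, k < m → w'.kind k = w.kind k := by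
          intro k hk
          rw [hw', append_kind_lo _ _ (by rw [hk1]; exact hk)]
          exact prefixW_kind w hm rfl hk
        have hkind_hi : ∀ k, m ≤ k → w'.kind k = .fwd := by
          intro k hk
          rw [hw', append_kind_hi _ _ (by rw [hk1]; exact hk)]
          exact ofChain_kind hh hl hch _
        have hvert_lo : ∀ k, k ≤ m → w'.vert k = w.vert k := by
          intro k hk
          rw [hw', append_vert_lo _ _ (by rw [hl1]; omega)]
          exact prefixW_vert w hm rfl hk
        have hvert_hi : ∀ k, m ≤ k → k - m < c → w'.vert k = l.getD (k - m) (w.vert m) := by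
          intro k hk hk2
          rw [hw', append_vert_hi _ _ (by rw [hk1]; exact hk) (by rw [hk1, hl2]; exact hk2), hk1]
          rfl
        have hchainanc : ∀ k, k < c → G.Ancestor (w.vert m) (l.getD k (w.vert m)) := by
          intro k hk
          exact chain_anc hch hh (w.vert m) k hk
        have hchainZ : ∀ k, k < c → l.getD k (w.vert m) ∉ Z := by
          intro k hk hin
          exact hmno ⟨l.getD k (w.vert m), hin, hchainanc k hk⟩
        -- every position ≥ m is a non-collider of w'
        have hnc_hi : ∀ p, m ≤ p → ¬ w'.ColliderAt p := by
          intro p hp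
          exact w'.not_colliderAt_right (hkind_hi p hp)
        -- colliders below m agree with w
        have hcol_lo : ∀ p, 1 ≤ p → p < m → (w'.ColliderAt p ↔ w.ColliderAt p) := by
          intro p h1 h2
          have e1 : w'.kind (p - 1) = w.kind (p - 1) := hkind_lo _ (by omega)
          have e2 : w'.kind p = w.kind p := hkind_lo _ h2
          unfold ColliderAt
          rw [e1, e2, hlw']
          constructor
          · rintro ⟨hA, hB, hC, hD⟩; exact ⟨by omega, by omega, hC, hD⟩
          · rintro ⟨hA, hB, hC, hD⟩; exact ⟨h1, by omega, hC, hD⟩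
        -- the new walk is Good, with strictly smaller bad set
        have hgood' : w'.Good Z := by
          intro p h1 h2
          rw [hlw'] at h2
          rcases Nat.lt_or_ge p m with hpm | hpm
          · have ev : w'.vert p = w.vert p := hvert_lo _ (by omega)
            have hcol := hcol_lo p h1 hpm
            constructor
            · intro hcp
              rw [ev]
              exact (hgood p h1 (by omega)).1 (hcol.mp hcp)
            · intro hcp
              rw [ev]
              exact (hgood p h1 (by omega)).2 (fun hcc => hcp (hcol.mpr hcc))
          · refine ⟨fun hcol => absurd hcol (hnc_hi p hpm), fun _ => ?_⟩
            rw [hvert_hi p hpm (by omega)]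
            exact hchainZ _ (by omega)
        have hsub : w'.badSet Z ⊆ w.badSet Z \ {m} := by
          intro p hp
          obtain ⟨hpc, hpno⟩ := hp
          have hpm : p < m := by
            by_contra hge
            exact (hnc_hi p (by omega)) hpc
          have h1 : 1 ≤ p := hpc.1
          refine ⟨⟨(hcol_lo p h1 hpm).mp hpc, ?_⟩, by simp; omega⟩
          rw [← hvert_lo p (by omega)]
          exact hpno
        refine ih w' ?_ hgood'
        have hle : (w'.badSet Z).ncard ≤ (w.badSet Z \ {m}).ncard :=
          Set.ncard_le_ncard hsub (hfin.subset Set.diff_subset)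
        have heq : (w.badSet Z \ {m}).ncard = (w.badSet Z).ncard - 1 :=
          Set.ncard_diff_singleton_of_mem (show m ∈ w.badSet Z from ⟨hmcol, hmno⟩)
        have hpos : 0 < (w.badSet Z).ncard :=
          (Set.ncard_pos hfin).mpr ⟨m, hmcol, hmno⟩
        omega

end Walk

end MGraph
namespace MGraph

variable {V : Type} {G : MGraph V} {x y : V}

/-- View a path as a walk. -/
def Path.toWalk (p : G.Path x y) : G.Walk x y :=
  ⟨p.verts, p.kinds, p.len_eq, p.head_eq, p.last_eq, p.valid⟩

/-- THE HARD LEMMA: an inducing path is never blocked: for every `Z` there is an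
m-connecting path. -/
theorem Path.exists_mconn_of_inducing (p : G.Path x y) (hp : p.Inducing) (Z : Set V) :
    ∃ q : G.Path x y, q.MConn Z := by
  have hgood : p.toWalk.Good Z := by
    intro i h1 h2
    obtain ⟨hc, ha⟩ := hp i h1 h2
    exact ⟨fun _ => Or.inr ha, fun hnc => absurd hc hnc⟩
  obtain ⟨w', hconn⟩ :=
    Walk.exists_conn_of_good ((p.toWalk.badSet Z).ncard) p.toWalk le_rfl hgood
  exact Walk.exists_path_of_conn w'.verts.length w' le_rfl hconn

/-- Interior vertices of a path differ from the endpoints. -/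
lemma Path.vert_ne_ends (p : G.Path x y) {i : ℕ} (h1 : 1 ≤ i)
    (h2 : i + 1 < p.verts.length) : p.vert i ≠ x ∧ p.vert i ≠ y := by
  have hinj := List.nodup_iff_injective_get.mp p.nodup
  have hlen : 0 < p.verts.length := by omega
  constructor
  · intro he
    have hx0 : p.verts.getD 0 x = x := head?_eq_getD _ _ p.head_eq
    have hget : p.verts.get ⟨i, by omega⟩ = p.verts.get ⟨0, hlen⟩ := by
      rw [List.get_eq_getElem, List.get_eq_getElem, ← getD_eq_get' _ x (by omega : i < p.verts.length),
        ← getD_eq_get' _ x hlen]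
      exact he.trans hx0.symm
    have := hinj hget
    simp only [Fin.mk.injEq] at this
    omega
  · intro he
    have hyl : p.verts.getD (p.verts.length - 1) x = y := getLast?_eq_getD _ _ p.last_eq
    have hget : p.verts.get ⟨i, by omega⟩ = p.verts.get ⟨p.verts.length - 1, by omega⟩ := by
      rw [List.get_eq_getElem, List.get_eq_getElem, ← getD_eq_get' _ x (by omega : i < p.verts.length),
        ← getD_eq_get' _ x (by omega)]
      exact he.trans hyl.symm
    have := hinj hget
    simp only [Fin.mk.injEq] at this
    omega

/-- If `Z` is the set of ancestors of the endpoints (minus the endpoints), every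
m-connecting path is inducing. -/
theorem Path.inducing_of_mconn {Z : Set V} (p : G.Path x y) (hconn : p.MConn Z)
    (hZ1 : ∀ v, v ≠ x → v ≠ y → (G.Ancestor v x ∨ G.Ancestor v y) → v ∈ Z)
    (hZ2 : ∀ v ∈ Z, G.Ancestor v x ∨ G.Ancestor v y) : p.Inducing := by
  have hwconn : p.toWalk.Conn Z := hconn
  have hlen : p.verts.length = p.toWalk.kinds.length + 1 := p.toWalk.hlen
  intro i h1 h2
  obtain ⟨hnex, hney⟩ := p.vert_ne_ends h1 h2
  have hcol : p.ColliderAt i := by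
    by_contra hnc
    have hnAB : ¬ ((p.toWalk.kind (i - 1)).arrowRight ∧ (p.toWalk.kind i).arrowLeft) :=
      fun hab => hnc ⟨h1, h2, hab.1, hab.2⟩
    have hanc : G.Ancestor (p.vert i) x ∨ G.Ancestor (p.vert i) y := by
      by_cases hA : (p.toWalk.kind (i - 1)).arrowRight
      · have hB : ¬ (p.toWalk.kind i).arrowLeft := fun hB => hnAB ⟨hA, hB⟩
        have hf : p.toWalk.kind i = .fwd := EKind.eq_fwd_of_not_arrowLeft hB
        rcases Walk.fwd_escape hwconn (i := i) (by omega) hf with ⟨d, hd, hdanc⟩ | h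
        · rcases hZ2 d hd with h | h
          · exact Or.inl (hdanc.trans h)
          · exact Or.inr (hdanc.trans h)
        · exact Or.inr h
      · have hb : p.toWalk.kind (i - 1) = .bwd := EKind.eq_bwd_of_not_arrowRight hA
        have hres := Walk.bwd_escape hwconn (j := i - 1) (by omega) hb
        rw [show i - 1 + 1 = i by omega] at hres
        rcases hres with ⟨d, hd, hdanc⟩ | h
        · rcases hZ2 d hd with h | h
          · exact Or.inl (hdanc.trans h)
          · exact Or.inr (hdanc.trans h)
        · exact Or.inl h
    have hinZ : p.vert i ∈ Z := hZ1 _ hnex hney hanc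
    exact ((hconn i h1 h2).2 hnc) hinZ
  refine ⟨hcol, ?_⟩
  obtain ⟨d, hd, hdanc⟩ := (hconn i h1 h2).1 hcol
  rcases hZ2 d hd with h | h
  · exact Or.inl (hdanc.trans h)
  · exact Or.inr (hdanc.trans h)

/-- Non-virtually-adjacent vertices are m-separated by the ancestors of the pair. -/
theorem msep_of_not_vadj (G : MGraph V) {a b : V} (hab : a ≠ b) (h : ¬ G.VAdj a b) :
    G.MSep a b {v | v ≠ a ∧ v ≠ b ∧ (G.Ancestor v a ∨ G.Ancestor v b)} := by
  refine ⟨hab, fun hc => hc.1 rfl, fun hc => hc.2.1 rfl, ?_, ?_⟩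
  · intro p hconn
    have hind := p.inducing_of_mconn hconn
      (fun v hva hvb hanc => ⟨hva, hvb, hanc⟩) (fun v hv => hv.2.2)
    exact h ⟨hab, Or.inl ⟨p, hind⟩⟩
  · intro p hconn
    have hind := p.inducing_of_mconn hconn
      (fun v hvb hva hanc => ⟨hva, hvb, hanc.symm⟩) (fun v hv => hv.2.2.symm)
    exact h ⟨hab, Or.inr ⟨p, hind⟩⟩

lemma exists_vadj_diff [Fintype V] (G G' : MGraph V) (h : G'.numVAdj < G.numVAdj) :
    ∃ a b, G.VAdj a b ∧ ¬ G'.VAdj a b := by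
  haveI : Finite (Sym2 V) := Finite.of_surjective (fun p : V × V => s(p.1, p.2))
    (fun e => by
      obtain ⟨⟨a, b⟩, rfl⟩ := Quot.exists_rep e
      exact ⟨(a, b), rfl⟩)
  by_contra hc
  push_neg at hc
  have hsub : {e : Sym2 V | ∃ a b, e = s(a, b) ∧ G.VAdj a b}
      ⊆ {e : Sym2 V | ∃ a b, e = s(a, b) ∧ G'.VAdj a b} := by
    rintro e ⟨a, b, rfl, hv⟩
    exact ⟨a, b, rfl, hc a b hv⟩
  have hle := Set.ncard_le_ncard hsub (Set.toFinite _)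
  unfold numVAdj at h
  omega

theorem vadjMinimal_of_markov_vadjfaithful [Fintype V] (G : MGraph V)
    (I : Set (Set V × Set V × Set V)) (hM : Markov G I) (hVF : VAdjFaithful G I) :
    VAdjMinimal G I := by
  rintro ⟨G', hac', hlt, hM'⟩
  obtain ⟨a, b, hv, hnv⟩ := exists_vadj_diff G G' hlt
  have hab : a ≠ b := hv.1
  set Z : Set V := {v | v ≠ a ∧ v ≠ b ∧ (G'.Ancestor v a ∨ G'.Ancestor v b)} with hZ
  have hsep := msep_of_not_vadj G' hab hnv
  have haZ : a ∉ Z := fun hc => hc.1 rfl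
  have hbZ : b ∉ Z := fun hc => hc.2.1 rfl
  have hmem : ({a}, {b}, Z) ∈ I := by
    apply hM' {a} {b} Z (Set.singleton_nonempty a) (Set.singleton_nonempty b)
    · exact Set.disjoint_singleton.mpr hab
    · exact Set.disjoint_singleton_left.mpr haZ
    · exact Set.disjoint_singleton_left.mpr hbZ
    · intro u hu v hv'
      rw [Set.mem_singleton_iff] at hu hv'
      subst hu; subst hv'
      exact hsep
  exact hVF a b hv Z haZ hbZ hmem

theorem vadjFaithful_of_faithful (G : MGraph V) (I : Set (Set V × Set V × Set V))
    (hF : Faithful G I) : VAdjFaithful G I := by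
  intro a b hv Z haZ hbZ hmem
  have hsep : G.MSep a b Z := hF {a} {b} Z hmem a rfl b rfl
  rcases hv.2 with ⟨p, hp⟩ | ⟨p, hp⟩
  · obtain ⟨q, hq⟩ := p.exists_mconn_of_inducing hp Z
    exact hsep.2.2.2.1 q hq
  · obtain ⟨q, hq⟩ := p.exists_mconn_of_inducing hp Z
    exact hsep.2.2.2.2 q hq

end MGraph

/-- If an SMCM `G` satisfies the Markov and V-adjacency-faithfulness
assumptions with `I`, then `G` is V-adjacency-minimal with `I`; in particular, Markov
plus Faithfulness entails V-adjacency-minimality. -/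
theorem statement_14 {V : Type} [Fintype V] [DecidableEq V]
    (G : MGraph V) (hG : G.Acyclic)
    (I : Set (Set V × Set V × Set V)) (hI : IsIndepModel I) :
    (Markov G I → VAdjFaithful G I → VAdjMinimal G I) ∧
    (Markov G I → Faithful G I → VAdjMinimal G I) := by
  constructor
  · intro hM hVF
    exact MGraph.vadjMinimal_of_markov_vadjfaithful G I hM hVF
  · intro hM hF
    exact MGraph.vadjMinimal_of_markov_vadjfaithful G I hM
      (MGraph.vadjFaithful_of_faithful G I hF)
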